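/- Among all matrices W ∈ ℝ^{d×m} satisfying Wᵀg = 0, the ridge objective J(W) = ‖Y − XW‖_F² + λ‖W‖_F² is minimized by W* = W̃ − A⁻¹g(gᵀA⁻¹g)⁻¹gᵀW̃, where A = XᵀX + λI and W̃ = A⁻¹XᵀY. -/

import Mathlib

open Matrix

/-- Squared Frobenius norm, `‖M‖_F² = tr(MᵀM)`. -/
def frobSq {n m : ℕ} (M : Matrix (Fin n) (Fin m) ℝ) : ℝ := Matrix.trace (Mᵀ * M)

private lemma crm_psd_trace_nonneg {k : ℕ} {N : Matrix (Fin k) (Fin k) ℝ}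
    (hN : N.PosSemidef) : 0 ≤ N.trace := by
  refine Finset.sum_nonneg fun j _ => ?_
  have := hN.dotProduct_mulVec_nonneg (Pi.single j 1)
  simpa [dotProduct, mulVec, Pi.single_apply, Finset.mul_sum] using this

private lemma crm_quad_nonneg {p q : ℕ} {A : Matrix (Fin p) (Fin p) ℝ}
    (hA : A.PosSemidef) (M : Matrix (Fin p) (Fin q) ℝ) :
    0 ≤ Matrix.trace (Mᵀ * A * M) := by
  have h := hA.conjTranspose_mul_mul_same M
  rw [conjTranspose_eq_transpose_of_trivial] at h
  exact crm_psd_trace_nonneg h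

private lemma crm_trace_swap {p q : ℕ} (A : Matrix (Fin p) (Fin p) ℝ) (hA : Aᵀ = A)
    (U V : Matrix (Fin p) (Fin q) ℝ) :
    Matrix.trace (Uᵀ * A * V) = Matrix.trace (Vᵀ * A * U) := by
  rw [← Matrix.trace_transpose (Vᵀ * A * U)]
  simp [Matrix.transpose_mul, hA, Matrix.mul_assoc]

private lemma crm_trace_sub_sq {p q : ℕ} (U V : Matrix (Fin p) (Fin q) ℝ) :
    Matrix.trace ((U - V)ᵀ * (U - V)) =
      Matrix.trace (Uᵀ * U) - 2 * Matrix.trace (Vᵀ * U) + Matrix.trace (Vᵀ * V) := by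
  have h : Matrix.trace (Uᵀ * V) = Matrix.trace (Vᵀ * U) := by
    rw [← Matrix.trace_transpose (Vᵀ * U), Matrix.transpose_mul, Matrix.transpose_transpose]
  simp only [Matrix.transpose_sub, Matrix.sub_mul, Matrix.mul_sub, Matrix.trace_sub, h]
  ring

private lemma crm_trace_quad_sub {p q : ℕ} (A : Matrix (Fin p) (Fin p) ℝ) (hA : Aᵀ = A)
    (U V : Matrix (Fin p) (Fin q) ℝ) :
    Matrix.trace ((U - V)ᵀ * A * (U - V)) =
      Matrix.trace (Uᵀ * A * U) - 2 * Matrix.trace (Vᵀ * A * U)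
        + Matrix.trace (Vᵀ * A * V) := by
  simp only [Matrix.transpose_sub, Matrix.sub_mul, Matrix.mul_sub, Matrix.trace_sub,
    crm_trace_swap A hA U V]
  ring

private lemma crm_trace_quad_add {p q : ℕ} (A : Matrix (Fin p) (Fin p) ℝ) (hA : Aᵀ = A)
    (U V : Matrix (Fin p) (Fin q) ℝ) :
    Matrix.trace ((U + V)ᵀ * A * (U + V)) =
      Matrix.trace (Uᵀ * A * U) + 2 * Matrix.trace (Vᵀ * A * U)
        + Matrix.trace (Vᵀ * A * V) := by
  simp only [Matrix.transpose_add, Matrix.add_mul, Matrix.mul_add, Matrix.trace_add,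
    crm_trace_swap A hA U V]
  ring

theorem constrained_ridge_minimizer (n d m : ℕ)
    (X : Matrix (Fin n) (Fin d) ℝ) (Y : Matrix (Fin n) (Fin m) ℝ)
    (lam : ℝ) (hlam : 0 < lam)
    (g : Fin d → ℝ) (hg : g ≠ 0)
    (A : Matrix (Fin d) (Fin d) ℝ)
    (hA : A = Xᵀ * X + lam • (1 : Matrix (Fin d) (Fin d) ℝ))
    (J : Matrix (Fin d) (Fin m) ℝ → ℝ)
    (hJ : ∀ W, J W = frobSq (Y - X * W) + lam * frobSq W)
    (Wt : Matrix (Fin d) (Fin m) ℝ) (hWt : Wt = A⁻¹ * Xᵀ * Y)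
    (Wstar : Matrix (Fin d) (Fin m) ℝ)
    (hWstar : Wstar = Wt - (g ⬝ᵥ (A⁻¹ *ᵥ g))⁻¹ • (A⁻¹ * Matrix.vecMulVec g g * Wt)) :
    Wstarᵀ *ᵥ g = 0 ∧ ∀ W, Wᵀ *ᵥ g = 0 → J Wstar ≤ J W := by
  -- basic facts about A
  have hAsymm : Aᵀ = A := by
    rw [hA]
    simp [Matrix.transpose_add, Matrix.transpose_mul, Matrix.transpose_smul]
  have hone : (lam • (1 : Matrix (Fin d) (Fin d) ℝ)).PosDef := by
    refine Matrix.posDef_iff_dotProduct_mulVec.mpr ⟨?_, ?_⟩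
    · rw [Matrix.IsHermitian]
      simp [conjTranspose_eq_transpose_of_trivial]
    · intro x hx
      have hxx : 0 < x ⬝ᵥ x :=
        lt_of_le_of_ne (Finset.sum_nonneg fun i _ => mul_self_nonneg _)
          (Ne.symm fun h => hx (dotProduct_self_eq_zero.mp h))
      have : (lam • (1 : Matrix (Fin d) (Fin d) ℝ)) *ᵥ x = lam • x := by
        rw [smul_mulVec, one_mulVec]
      rw [this]
      simpa [dotProduct_smul, smul_eq_mul] using mul_pos hlam hxx
  have hXX : (Xᵀ * X).PosSemidef := by
    have h := Matrix.posSemidef_conjTranspose_mul_self X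
    rwa [conjTranspose_eq_transpose_of_trivial] at h
  have hApd : A.PosDef := by
    rw [hA]; exact Matrix.PosDef.posSemidef_add hXX hone
  have hdet : IsUnit A.det := hApd.det_pos.ne'.isUnit
  have hAAinv : A * A⁻¹ = 1 := Matrix.mul_nonsing_inv A hdet
  have hAinvT : (A⁻¹)ᵀ = A⁻¹ := by rw [Matrix.transpose_nonsing_inv, hAsymm]
  have hs : 0 < g ⬝ᵥ (A⁻¹ *ᵥ g) := by
    have := hApd.inv.dotProduct_mulVec_pos hg
    simpa using this
  have hGsymm : (Matrix.vecMulVec g g)ᵀ = Matrix.vecMulVec g g := by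
    ext i j; simp [Matrix.vecMulVec_apply, mul_comm]
  have hGv : ∀ v : Fin d → ℝ, Matrix.vecMulVec g g *ᵥ v = (g ⬝ᵥ v) • g := by
    intro v
    ext i
    simp only [Matrix.mulVec, Matrix.vecMulVec_apply, dotProduct, Pi.smul_apply,
      smul_eq_mul, Finset.sum_mul]
    exact Finset.sum_congr rfl fun j _ => by ring
  -- Part 1 : the constraint holds for Wstar
  have hP1 : Wstarᵀ *ᵥ g = 0 := by
    have h1 : (A⁻¹ * Matrix.vecMulVec g g * Wt)ᵀ *ᵥ g
        = (g ⬝ᵥ (A⁻¹ *ᵥ g)) • (Wtᵀ *ᵥ g) := by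
      rw [Matrix.transpose_mul, Matrix.transpose_mul, hGsymm, hAinvT]
      rw [← Matrix.mulVec_mulVec, ← Matrix.mulVec_mulVec, hGv, Matrix.mulVec_smul]
    rw [hWstar, Matrix.transpose_sub, Matrix.transpose_smul, Matrix.sub_mulVec,
      smul_mulVec, h1, smul_smul, inv_mul_cancel₀ hs.ne', one_smul, sub_self]
  refine ⟨hP1, ?_⟩
  -- A * Wt = Xᵀ * Y
  have hAWt : A * Wt = Xᵀ * Y := by
    rw [hWt, ← Matrix.mul_assoc, ← Matrix.mul_assoc, hAAinv, Matrix.one_mul]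
  -- key expansion of J
  have hkey : ∀ M : Matrix (Fin d) (Fin m) ℝ,
      J M = Matrix.trace ((M - Wt)ᵀ * A * (M - Wt))
        + (Matrix.trace (Yᵀ * Y) - Matrix.trace (Wtᵀ * A * Wt)) := by
    intro M
    rw [hJ]
    unfold frobSq
    rw [crm_trace_sub_sq Y (X * M)]
    have h1 : (X * M)ᵀ * Y = Mᵀ * A * Wt := by
      rw [Matrix.transpose_mul, Matrix.mul_assoc, ← hAWt, ← Matrix.mul_assoc]
    have h2 : Matrix.trace ((X * M)ᵀ * (X * M)) + lam * Matrix.trace (Mᵀ * M)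
        = Matrix.trace (Mᵀ * A * M) := by
      rw [hA]
      have : Mᵀ * (Xᵀ * X + lam • (1 : Matrix (Fin d) (Fin d) ℝ)) * M
          = (X * M)ᵀ * (X * M) + lam • (Mᵀ * M) := by
        rw [Matrix.transpose_mul, Matrix.mul_add, Matrix.add_mul]
        congr 1
        · simp [Matrix.mul_assoc]
        · rw [Matrix.mul_smul, Matrix.mul_one, Matrix.smul_mul]
      rw [this, Matrix.trace_add, Matrix.trace_smul, smul_eq_mul]
    rw [crm_trace_quad_sub A hAsymm M Wt]
    have h3 : Matrix.trace ((X * M)ᵀ * Y) = Matrix.trace (Wtᵀ * A * M) := by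
      rw [h1, crm_trace_swap A hAsymm M Wt]
    rw [h3]
    linarith [h2]
  -- the inequality
  intro W hW
  have hDg : (W - Wstar)ᵀ *ᵥ g = 0 := by
    rw [Matrix.transpose_sub, Matrix.sub_mulVec, hW, hP1, sub_zero]
  have hDG : (W - Wstar)ᵀ * Matrix.vecMulVec g g = 0 := by
    ext i j
    have h2 : ((W - Wstar)ᵀ *ᵥ g) i = 0 := by rw [hDg]; rfl
    simp only [Matrix.mulVec, dotProduct] at h2
    simp only [Matrix.mul_apply, Matrix.vecMulVec_apply, Matrix.zero_apply]
    have : (∑ k, (W - Wstar)ᵀ i k * (g k * g j))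
        = (∑ k, (W - Wstar)ᵀ i k * g k) * g j := by
      rw [Finset.sum_mul]; exact Finset.sum_congr rfl fun k _ => by ring
    rw [this, h2, zero_mul]
  set c : ℝ := (g ⬝ᵥ (A⁻¹ *ᵥ g))⁻¹ with hc
  have hAE : A * (Wstar - Wt) = -(c • (Matrix.vecMulVec g g * Wt)) := by
    have h1 : Wstar - Wt = -(c • (A⁻¹ * Matrix.vecMulVec g g * Wt)) := by
      rw [hWstar]; abel
    rw [h1, Matrix.mul_neg, Matrix.mul_smul, ← Matrix.mul_assoc, ← Matrix.mul_assoc,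
      hAAinv, Matrix.one_mul]
  have hcross : Matrix.trace ((Wstar - Wt)ᵀ * A * (W - Wstar)) = 0 := by
    rw [← crm_trace_swap A hAsymm (W - Wstar) (Wstar - Wt)]
    rw [Matrix.mul_assoc, hAE, Matrix.mul_neg, Matrix.mul_smul, ← Matrix.mul_assoc,
      hDG, Matrix.zero_mul, smul_zero, neg_zero, Matrix.trace_zero]
  have hquad : 0 ≤ Matrix.trace ((W - Wstar)ᵀ * A * (W - Wstar)) :=
    crm_quad_nonneg hApd.posSemidef (W - Wstar)
  have hdecomp : W - Wt = (W - Wstar) + (Wstar - Wt) := by abel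
  have hk1 := hkey W
  have hk2 := hkey Wstar
  rw [hdecomp, crm_trace_quad_add A hAsymm (W - Wstar) (Wstar - Wt)] at hk1
  rw [hcross] at hk1
  linarith
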